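/- Assume the relative quality functions satisfy q_j(A) = 1/(n·C(n−1,|A|)) for every j ∈ C and A ⊆ C∖{j}. Then for every nonempty M ⊆ C and k ∈ {1,…,m}, p_M^{(k)} = ∑_{j∈M} ∑_{A⊆C, |(M∖A)∪{j}|=k} (−1)^{|{j}∖A|} · (1/(n·C(n−1,|A∖{j}|))) · φ(A). -/

import Mathlib

open MeasureTheory Finset

/-- Lifetime of the (sub)system on component set `D` with structure function `χ`
(the maximum over the sets `A ⊆ D` with `χ A = 1` of `min_{i ∈ A} T i`). -/
noncomputable def sysLifeOn {Ω : Type*} {n : ℕ} (T : Fin n → Ω → ℝ)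
    (D : Finset (Fin n)) (χ : Finset (Fin n) → ℝ) (ω : Ω) : ℝ :=
  if h : (D.powerset.filter fun A => χ A = 1).Nonempty then
    (D.powerset.filter fun A => χ A = 1).sup' h
      (fun A => if hA : A.Nonempty then A.inf' hA fun i => T i ω else 0)
  else 0

/-- The `k`-th order statistic of the lifetimes `(T i)_{i ∈ M}`. -/
noncomputable def orderStat {Ω : Type*} {n : ℕ} (T : Fin n → Ω → ℝ)
    (M : Finset (Fin n)) (k : ℕ) (ω : Ω) : ℝ :=
  ((M.val.map fun i => T i ω).sort (· ≤ ·)).getD (k - 1) 0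

/-- The relative quality function `q_j(A) = Pr(max_{i ∈ C∖A} T_i = T_j < min_{i ∈ A} T_i)`. -/
noncomputable def relQual {Ω : Type*} [MeasurableSpace Ω] {n : ℕ} (μ : Measure Ω)
    (T : Fin n → Ω → ℝ) (j : Fin n) (A : Finset (Fin n)) : ℝ :=
  (μ {ω | (∀ i ∉ A, T i ω ≤ T j ω) ∧ ∀ i ∈ A, T j ω < T i ω}).toReal


/-- Components strictly alive after `x j`. -/
noncomputable def upSet {n : ℕ} (x : Fin n → ℝ) (j : Fin n) : Finset (Fin n) :=
  Finset.univ.filter fun i => x j < x i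

lemma mem_upSet {n : ℕ} {x : Fin n → ℝ} {j i : Fin n} : i ∈ upSet x j ↔ x j < x i := by
  simp [upSet]

lemma not_mem_upSet_self {n : ℕ} (x : Fin n → ℝ) (j : Fin n) : j ∉ upSet x j := by
  simp [upSet]

section SysLife
variable {Ω : Type*} {n : ℕ} (T : Fin n → Ω → ℝ) (ω : Ω) (φ : Finset (Fin n) → ℝ)

lemma sysLife_eq (hφmono : ∀ A B : Finset (Fin n), A ⊆ B → φ A ≤ φ B)
    (hφempty : φ ∅ = 0) (hφfull : φ Finset.univ = 1)
    (j : Fin n) (h1 : φ (insert j (upSet (fun i => T i ω) j)) = 1)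
    (h0 : φ (upSet (fun i => T i ω) j) = 0) :
    sysLifeOn T Finset.univ φ ω = T j ω := by
  classical
  set x : Fin n → ℝ := fun i => T i ω with hxdef
  set F : Finset (Finset (Fin n)) := Finset.univ.powerset.filter (fun A => φ A = 1) with hF
  have hmemF : ∀ {A : Finset (Fin n)}, A ∈ F ↔ φ A = 1 := by
    intro A; simp [hF]
  have hne : F.Nonempty := ⟨Finset.univ, hmemF.mpr hφfull⟩
  rw [sysLifeOn, dif_pos hne]
  have hBmem : insert j (upSet x j) ∈ F := hmemF.mpr h1
  have hBne : (insert j (upSet x j)).Nonempty := ⟨j, mem_insert_self _ _⟩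
  apply le_antisymm
  · apply Finset.sup'_le
    intro A hA
    have hA1 : φ A = 1 := hmemF.mp hA
    have hAne : A.Nonempty := by
      rcases A.eq_empty_or_nonempty with h | h
      · exfalso; rw [h, hφempty] at hA1; norm_num at hA1
      · exact h
    rw [dif_pos hAne]
    by_contra hcon
    push_neg at hcon
    have hsub : A ⊆ upSet x j := by
      intro m hm
      exact mem_upSet.mpr (lt_of_lt_of_le hcon (Finset.inf'_le _ hm))
    have := hφmono _ _ hsub
    rw [hA1, h0] at this; norm_num at this
  · have hval : (insert j (upSet x j)).inf' hBne x = x j := by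
      apply le_antisymm
      · exact Finset.inf'_le _ (mem_insert_self _ _)
      · apply Finset.le_inf'
        intro m hm
        rcases Finset.mem_insert.mp hm with h | h
        · rw [h]
        · exact (mem_upSet.mp h).le
    have := Finset.le_sup' (f := fun A : Finset (Fin n) =>
        if hA : A.Nonempty then A.inf' hA (fun i => T i ω) else 0) hBmem
    rw [dif_pos hBne] at this
    exact le_of_eq_of_le hval.symm this

lemma exists_crit (hφ01 : ∀ A, φ A = 0 ∨ φ A = 1)
    (hφmono : ∀ A B : Finset (Fin n), A ⊆ B → φ A ≤ φ B)
    (hφempty : φ ∅ = 0) (hφfull : φ Finset.univ = 1)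
    (x : Fin n → ℝ) (hx : Function.Injective x) (hn : 0 < n) :
    ∃ j, φ (insert j (upSet x j)) = 1 ∧ φ (upSet x j) = 0 := by
  classical
  haveI : Nonempty (Fin n) := ⟨⟨0, hn⟩⟩
  obtain ⟨i0, _, hi0⟩ := Finset.exists_min_image Finset.univ x Finset.univ_nonempty
  have hi0full : insert i0 (upSet x i0) = Finset.univ := by
    apply Finset.eq_univ_of_forall
    intro l
    by_cases h : l = i0
    · rw [h]; exact mem_insert_self _ _
    · refine Finset.mem_insert_of_mem (mem_upSet.mpr ?_)
      exact lt_of_le_of_ne (hi0 l (Finset.mem_univ l)) (fun he => h (hx he).symm)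
  set s : Finset (Fin n) := Finset.univ.filter (fun i => φ (insert i (upSet x i)) = 1) with hs
  have hsne : s.Nonempty := ⟨i0, by simp [hs, hi0full, hφfull]⟩
  obtain ⟨j, hjs, hjmax⟩ := Finset.exists_max_image s x hsne
  have hj1 : φ (insert j (upSet x j)) = 1 := (Finset.mem_filter.mp hjs).2
  refine ⟨j, hj1, ?_⟩
  by_contra hcon
  have hj0 : φ (upSet x j) = 1 := (hφ01 _).resolve_left hcon
  have hune : (upSet x j).Nonempty := by
    rcases (upSet x j).eq_empty_or_nonempty with h | h
    · rw [h, hφempty] at hj0; norm_num at hj0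
    · exact h
  obtain ⟨i, hiu, himin⟩ := Finset.exists_min_image _ x hune
  have hsub : upSet x j ⊆ insert i (upSet x i) := by
    intro l hl
    by_cases h : l = i
    · rw [h]; exact mem_insert_self _ _
    · refine Finset.mem_insert_of_mem (mem_upSet.mpr ?_)
      exact lt_of_le_of_ne (himin l hl) (fun he => h (hx he).symm)
  have h1 : φ (insert i (upSet x i)) = 1 := by
    have hle := hφmono _ _ hsub
    rw [hj0] at hle
    have hle2 := hφmono _ _ (Finset.subset_univ (insert i (upSet x i)))
    rw [hφfull] at hle2
    linarith
  have his : i ∈ s := Finset.mem_filter.mpr ⟨Finset.mem_univ i, h1⟩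
  have := hjmax i his
  have := mem_upSet.mp hiu
  linarith

lemma crit_not_lt (hφmono : ∀ A B : Finset (Fin n), A ⊆ B → φ A ≤ φ B)
    (x : Fin n → ℝ) {j j' : Fin n} (hlt : x j < x j')
    (h1 : φ (insert j' (upSet x j')) = 1) (h0 : φ (upSet x j) = 0) : False := by
  have hsub : insert j' (upSet x j') ⊆ upSet x j := by
    intro l hl
    rcases Finset.mem_insert.mp hl with h | h
    · rw [h]; exact mem_upSet.mpr hlt
    · exact mem_upSet.mpr (hlt.trans (mem_upSet.mp h))
  have := hφmono _ _ hsub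
  rw [h1, h0] at this; norm_num at this

lemma crit_unique (hφmono : ∀ A B : Finset (Fin n), A ⊆ B → φ A ≤ φ B)
    (x : Fin n → ℝ) (hx : Function.Injective x) {j j' : Fin n}
    (hj1 : φ (insert j (upSet x j)) = 1) (hj0 : φ (upSet x j) = 0)
    (hj'1 : φ (insert j' (upSet x j')) = 1) (hj'0 : φ (upSet x j') = 0) : j = j' := by
  rcases lt_trichotomy (x j) (x j') with h | h | h
  · exact absurd (crit_not_lt φ hφmono x h hj'1 hj0) (fun f => f.elim)
  · exact hx h
  · exact absurd (crit_not_lt φ hφmono x h hj1 hj'0) (fun f => f.elim)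

end SysLife

section OrderStat

lemma filt_take : ∀ (l : List ℝ), l.Pairwise (· < ·) → ∀ (p : ℕ) (hp : p < l.length),
    (l.filter (fun y => y ≤ l.get ⟨p, hp⟩)).length = p + 1 := by
  intro l
  induction l with
  | nil => intro _ p hp; simp at hp
  | cons a t ih =>
    intro hl p hp
    have ha : ∀ b ∈ t, a < b := (List.pairwise_cons.mp hl).1
    have ht : t.Pairwise (· < ·) := (List.pairwise_cons.mp hl).2
    match p with
    | 0 =>
      have hget : (a :: t).get ⟨0, hp⟩ = a := rfl
      rw [hget, List.filter_cons]
      have : t.filter (fun y => decide (y ≤ a)) = [] := by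
        apply List.filter_eq_nil_iff.mpr
        intro b hb
        simpa using not_le.mpr (ha b hb)
      simp [this]
    | p + 1 =>
      have hp' : p < t.length := by simpa using hp
      have hget : (a :: t).get ⟨p + 1, hp⟩ = t.get ⟨p, hp'⟩ := rfl
      rw [hget, List.filter_cons]
      have hale : a ≤ t.get ⟨p, hp'⟩ := (ha _ (t.get_mem _)).le
      rw [if_pos (by simpa using hale)]
      simpa using ih ht p hp'

variable {Ω : Type*} {n : ℕ} (T : Fin n → Ω → ℝ) (ω : Ω)

lemma orderStat_mem (M : Finset (Fin n)) (k : ℕ) (hk1 : 1 ≤ k) (hkm : k ≤ M.card) :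
    ∃ j ∈ M, orderStat T M k ω = T j ω := by
  classical
  set s : Multiset ℝ := M.val.map (fun i => T i ω) with hs
  set l : List ℝ := s.sort (· ≤ ·) with hl
  have hlen : l.length = M.card := by
    rw [hl, Multiset.length_sort, hs, Multiset.card_map]; rfl
  have hklt : k - 1 < l.length := by omega
  have hmem : l.get ⟨k - 1, hklt⟩ ∈ l := l.get_mem _
  have hmem' : l.get ⟨k - 1, hklt⟩ ∈ s := by
    rw [← Multiset.mem_sort (· ≤ ·)]; exact hmem
  rw [hs, Multiset.mem_map] at hmem'
  obtain ⟨j, hjM, hje⟩ := hmem'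
  refine ⟨j, hjM, ?_⟩
  rw [orderStat]
  show l.getD (k - 1) 0 = T j ω
  rw [hje]
  exact List.getD_eq_get l 0 ⟨k - 1, hklt⟩

lemma count_le_aux (M : Finset (Fin n)) (c : ℝ) :
    (M.filter fun i => T i ω ≤ c).card
      = (((M.val.map (fun i => T i ω)).sort (· ≤ ·)).filter (fun y => y ≤ c)).length := by
  classical
  set s : Multiset ℝ := M.val.map (fun i => T i ω) with hs
  set l : List ℝ := s.sort (· ≤ ·) with hl
  have h1 : (↑(l.filter (fun y => decide (y ≤ c))) : Multiset ℝ) = s.filter (fun y => y ≤ c) := by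
    rw [← Multiset.filter_coe, hl, Multiset.sort_eq]
  have h2 : (l.filter (fun y => decide (y ≤ c))).length
      = Multiset.card (s.filter (fun y => y ≤ c)) := by
    rw [← h1, Multiset.coe_card]
  rw [h2, hs, Multiset.filter_map, Multiset.card_map]
  rfl

lemma orderStat_eq_iff (hx : Function.Injective (fun i => T i ω))
    (M : Finset (Fin n)) (k : ℕ) (hk1 : 1 ≤ k) (hkm : k ≤ M.card)
    (j : Fin n) (hj : j ∈ M) :
    orderStat T M k ω = T j ω ↔ (M.filter fun i => T i ω ≤ T j ω).card = k := by
  classical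
  set s : Multiset ℝ := M.val.map (fun i => T i ω) with hs
  set l : List ℝ := s.sort (· ≤ ·) with hl
  have hlen : l.length = M.card := by
    rw [hl, Multiset.length_sort, hs, Multiset.card_map]; rfl
  have hklt : k - 1 < l.length := by omega
  have hnd : l.Nodup := by
    have hs' : s.Nodup := Multiset.Nodup.map hx M.nodup
    have h2 : (↑l : Multiset ℝ).Nodup := by rw [hl, Multiset.sort_eq]; exact hs'
    exact Multiset.coe_nodup.mp h2
  have hsorted : l.Pairwise (· < ·) := ((show l.Pairwise (· ≤ ·) by rw [hl]; exact Multiset.pairwise_sort _ _).and hnd).imp fun h => lt_of_le_of_ne h.1 h.2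
  have hOS : orderStat T M k ω = l.get ⟨k - 1, hklt⟩ := List.getD_eq_get l 0 ⟨k - 1, hklt⟩
  constructor
  · intro h
    rw [count_le_aux, ← hs, ← hl, ← h, hOS, filt_take l hsorted (k-1) hklt]
    omega
  · intro h
    have hmem : T j ω ∈ l := by
      rw [hl, Multiset.mem_sort, hs, Multiset.mem_map]
      exact ⟨j, hj, rfl⟩
    obtain ⟨p, hp⟩ := List.mem_iff_get.mp hmem
    have hc : (l.filter (fun y => y ≤ T j ω)).length = p.val + 1 := by
      rw [← hp]; exact filt_take l hsorted p.val p.isLt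
    rw [count_le_aux, ← hs, ← hl, hc] at h
    have : (⟨k - 1, hklt⟩ : Fin l.length) = p := by
      apply Fin.ext; simp; omega
    rw [hOS, this, hp]

end OrderStat

section Events
variable {Ω : Type*} [MeasurableSpace Ω] {n : ℕ} (T : Fin n → Ω → ℝ)

/-- The event appearing in `relQual`. -/
def Eset (j : Fin n) (B : Finset (Fin n)) : Set Ω :=
  {ω | (∀ i ∉ B, T i ω ≤ T j ω) ∧ ∀ i ∈ B, T j ω < T i ω}

lemma measurable_Eset (hTmeas : ∀ i, Measurable (T i)) (j : Fin n) (B : Finset (Fin n)) :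
    MeasurableSet (Eset T j B) := by
  have h : Eset T j B = (⋂ i, ⋂ (_ : i ∉ B), {ω | T i ω ≤ T j ω})
      ∩ (⋂ i, ⋂ (_ : i ∈ B), {ω | T j ω < T i ω}) := by
    ext ω; simp [Eset, Set.mem_iInter]
  rw [h]
  exact (MeasurableSet.iInter fun i => MeasurableSet.iInter fun _ =>
      measurableSet_le (hTmeas i) (hTmeas j)).inter
    (MeasurableSet.iInter fun i => MeasurableSet.iInter fun _ =>
      measurableSet_lt (hTmeas j) (hTmeas i))

lemma mem_Eset_iff {ω : Ω} (hx : Function.Injective fun i => T i ω) {j : Fin n}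
    {B : Finset (Fin n)} :
    ω ∈ Eset T j B ↔ B = upSet (fun i => T i ω) j := by
  constructor
  · rintro ⟨h1, h2⟩
    ext i
    rw [mem_upSet]
    constructor
    · exact h2 i
    · intro hlt
      by_contra hiB
      exact absurd (h1 i hiB) (not_le.mpr hlt)
  · rintro rfl
    exact ⟨fun i hi => not_lt.mp (fun h => hi (mem_upSet.mpr h)),
      fun i hi => mem_upSet.mp hi⟩

/-- The set of sample points where all lifetimes are distinct. -/
def GoodSet : Set Ω := ⋂ (i) (j) (_ : i ≠ j), {ω | ¬ T i ω = T j ω}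

lemma inj_of_mem_Good {ω : Ω} (hω : ω ∈ GoodSet T) :
    Function.Injective fun i => T i ω := by
  intro a b hab
  by_contra hne
  simp only [GoodSet, Set.mem_iInter, Set.mem_setOf_eq] at hω
  exact hω a b hne hab

lemma Good_compl_null (μ : Measure Ω) (hties : ∀ i j : Fin n, i ≠ j → μ {ω | T i ω = T j ω} = 0) :
    μ (GoodSet T)ᶜ = 0 := by
  have h : (GoodSet T)ᶜ = ⋃ (i) (j) (_ : i ≠ j), {ω | T i ω = T j ω} := by
    rw [GoodSet]
    simp only [Set.compl_iInter, Set.compl_setOf, not_not]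
  rw [h]
  exact measure_iUnion_null fun i => measure_iUnion_null fun j =>
    measure_iUnion_null fun hij => hties i j hij

end Events

lemma rhs_eq {n : ℕ} (φ : Finset (Fin n) → ℝ)
    (hφ01 : ∀ A, φ A = 0 ∨ φ A = 1)
    (hφmono : ∀ A B : Finset (Fin n), A ⊆ B → φ A ≤ φ B)
    (M : Finset (Fin n)) (k : ℕ) (c : ℕ → ℝ) :
    ∑ j ∈ M, ∑ A ∈ (Finset.univ : Finset (Fin n)).powerset.filter
        (fun A => ((M \ A) ∪ {j}).card = k),
      (-1 : ℝ) ^ (({j} \ A : Finset (Fin n)).card) * c (A \ {j}).card * φ A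
    = ∑ p ∈ (M ×ˢ (Finset.univ : Finset (Fin n)).powerset).filter
        (fun p => p.1 ∉ p.2 ∧ (M \ p.2).card = k ∧ φ (insert p.1 p.2) = 1 ∧ φ p.2 = 0),
      c p.2.card := by
  classical
  rw [Finset.sum_filter, Finset.sum_product]
  apply Finset.sum_congr rfl
  intro j hjM
  -- restrict RHS sum to subsets avoiding j
  have hsub : ((Finset.univ : Finset (Fin n)).erase j).powerset
      ⊆ (Finset.univ : Finset (Fin n)).powerset := by
    intro B hB
    exact Finset.mem_powerset.mpr (Finset.subset_univ B)
  have hz : ∀ B ∈ (Finset.univ : Finset (Fin n)).powerset,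
      B ∉ ((Finset.univ : Finset (Fin n)).erase j).powerset →
      (if j ∉ B ∧ (M \ B).card = k ∧ φ (insert j B) = 1 ∧ φ B = 0
        then c B.card else 0) = 0 := by
    intro B _ hB
    have hjB : ¬ j ∉ B := by
      intro hj
      exact hB (Finset.mem_powerset.mpr (Finset.subset_erase.mpr ⟨Finset.subset_univ B, hj⟩))
    rw [if_neg (by tauto)]
  rw [← Finset.sum_subset hsub hz]
  -- expand LHS sum
  rw [Finset.sum_filter,
    show ((Finset.univ : Finset (Fin n)).powerset)
      = (insert j ((Finset.univ : Finset (Fin n)).erase j)).powerset from by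
        rw [Finset.insert_erase (Finset.mem_univ j)],
    Finset.sum_powerset_insert (Finset.notMem_erase j Finset.univ),
    ← Finset.sum_add_distrib]
  apply Finset.sum_congr rfl
  intro B hB
  have hjB : j ∉ B := (Finset.subset_erase.mp (Finset.mem_powerset.mp hB)).2
  have hjMB : j ∈ M \ B := Finset.mem_sdiff.mpr ⟨hjM, hjB⟩
  have e1 : (M \ B) ∪ {j} = M \ B :=
    Finset.union_eq_left.mpr (Finset.singleton_subset_iff.mpr hjMB)
  have e2 : (M \ insert j B) ∪ {j} = M \ B := by
    rw [Finset.sdiff_insert]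
    ext i
    by_cases h : i = j
    · subst h; simp [hjM, hjB]
    · simp [Finset.mem_union, Finset.mem_erase, Finset.mem_sdiff, h]
  have e3 : ({j} : Finset (Fin n)) \ B = {j} := by
    ext i; simp only [Finset.mem_sdiff, Finset.mem_singleton]
    constructor
    · tauto
    · rintro rfl; exact ⟨rfl, hjB⟩
  have e4 : ({j} : Finset (Fin n)) \ insert j B = ∅ := by
    rw [Finset.sdiff_eq_empty_iff_subset]
    exact Finset.singleton_subset_iff.mpr (Finset.mem_insert_self j B)
  have e5 : B \ {j} = B := by
    ext i; simp only [Finset.mem_sdiff, Finset.mem_singleton]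
    constructor
    · tauto
    · intro hi; exact ⟨hi, fun h => hjB (h ▸ hi)⟩
  have e6 : insert j B \ {j} = B := by
    rw [Finset.sdiff_singleton_eq_erase, Finset.erase_insert hjB]
  rw [e1, e2, e3, e4, e5, e6]
  have hmono' : φ B ≤ φ (insert j B) := hφmono _ _ (Finset.subset_insert j B)
  simp only [Finset.card_singleton, Finset.card_empty, pow_one, pow_zero, one_mul, hjB,
    not_false_iff, true_and]
  rcases hφ01 B with hB0 | hB1 <;> rcases hφ01 (insert j B) with hI0 | hI1 <;>
    split_ifs with h1 h2 h3 <;>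
    simp_all <;> linarith


lemma measurable_Good {Ω : Type*} [MeasurableSpace Ω] {n : ℕ} (T : Fin n → Ω → ℝ)
    (hTmeas : ∀ i, Measurable (T i)) : MeasurableSet (GoodSet T) := by
  apply MeasurableSet.iInter; intro i
  apply MeasurableSet.iInter; intro j
  apply MeasurableSet.iInter; intro _
  have := (measurableSet_eq_fun (hTmeas i) (hTmeas j)).compl
  simpa [Set.compl_setOf] using this

theorem stmt_9 {Ω : Type*} [MeasurableSpace Ω] (μ : Measure Ω) [IsProbabilityMeasure μ]
    {n : ℕ} (T : Fin n → Ω → ℝ) (hTmeas : ∀ i, Measurable (T i))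
    (hTnonneg : ∀ i ω, 0 ≤ T i ω)
    (hties : ∀ i j : Fin n, i ≠ j → μ {ω | T i ω = T j ω} = 0)
    (φ : Finset (Fin n) → ℝ)
    (hφ01 : ∀ A, φ A = 0 ∨ φ A = 1)
    (hφmono : ∀ A B : Finset (Fin n), A ⊆ B → φ A ≤ φ B)
    (hφempty : φ ∅ = 0) (hφfull : φ Finset.univ = 1)
    (hq : ∀ (j : Fin n) (A : Finset (Fin n)), j ∉ A →
      relQual μ T j A = 1 / ((n : ℝ) * ((n - 1).choose A.card : ℕ)))
    (M : Finset (Fin n)) (hM : M.Nonempty) (k : ℕ) (hk1 : 1 ≤ k) (hkm : k ≤ M.card) :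
    (μ {ω | sysLifeOn T Finset.univ φ ω = orderStat T M k ω}).toReal =
      ∑ j ∈ M, ∑ A ∈ (Finset.univ : Finset (Fin n)).powerset.filter
          (fun A => ((M \ A) ∪ {j}).card = k),
        (-1 : ℝ) ^ (({j} \ A : Finset (Fin n)).card) *
          (1 / ((n : ℝ) * ((n - 1).choose (A \ {j}).card : ℕ))) * φ A := by
  classical
  obtain ⟨j0, hj0M⟩ := hM
  have hn : 0 < n := j0.pos
  set G : Finset (Fin n × Finset (Fin n)) :=
    (M ×ˢ (Finset.univ : Finset (Fin n)).powerset).filter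
      (fun p => p.1 ∉ p.2 ∧ (M \ p.2).card = k ∧ φ (insert p.1 p.2) = 1 ∧ φ p.2 = 0)
    with hG
  have hGmem : ∀ {p : Fin n × Finset (Fin n)}, p ∈ G ↔
      p.1 ∈ M ∧ (p.1 ∉ p.2 ∧ (M \ p.2).card = k ∧ φ (insert p.1 p.2) = 1 ∧ φ p.2 = 0) := by
    intro p
    rw [hG, Finset.mem_filter, Finset.mem_product]
    simp [Finset.mem_powerset, Finset.subset_univ]
  have hGc : μ (GoodSet T)ᶜ = 0 := Good_compl_null T μ hties
  have hGoodMeas : MeasurableSet (GoodSet T) := measurable_Good T hTmeas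
  have hMB : ∀ (ω : Ω) (j : Fin n), M \ upSet (fun i => T i ω) j
      = M.filter (fun i => T i ω ≤ T j ω) := by
    intro ω j
    ext i
    simp [Finset.mem_sdiff, mem_upSet, Finset.mem_filter, not_lt]
  have hkey : ∀ ω ∈ GoodSet T,
      ((sysLifeOn T Finset.univ φ ω = orderStat T M k ω) ↔ ∃ p ∈ G, ω ∈ Eset T p.1 p.2) := by
    intro ω hω
    have hx : Function.Injective fun i => T i ω := inj_of_mem_Good T hω
    constructor
    · intro hSω
      obtain ⟨j, h1, h0⟩ := exists_crit φ hφ01 hφmono hφempty hφfull _ hx hn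
      have hsys := sysLife_eq T ω φ hφmono hφempty hφfull j h1 h0
      obtain ⟨i, hiM, hio⟩ := orderStat_mem T ω M k hk1 hkm
      have hTji : T j ω = T i ω := by rw [← hsys, hSω, hio]
      have hji : j = i := hx hTji
      have hjM : j ∈ M := hji ▸ hiM
      have horder : orderStat T M k ω = T j ω := by rw [← hSω, hsys]
      have hcard : (M.filter fun i => T i ω ≤ T j ω).card = k :=
        (orderStat_eq_iff T ω hx M k hk1 hkm j hjM).mp horder
      refine ⟨(j, upSet (fun i => T i ω) j),
        hGmem.mpr ⟨hjM, not_mem_upSet_self _ _, ?_, h1, h0⟩,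
        (mem_Eset_iff T hx).mpr rfl⟩
      rw [hMB ω j]
      exact hcard
    · rintro ⟨⟨j, B⟩, hpG, hpE⟩
      obtain ⟨hjM, hjB, hcard, h1, h0⟩ := hGmem.mp hpG
      have hB : B = upSet (fun i => T i ω) j := (mem_Eset_iff T hx).mp hpE
      subst hB
      have hsys := sysLife_eq T ω φ hφmono hφempty hφfull j h1 h0
      have horder : orderStat T M k ω = T j ω := by
        refine (orderStat_eq_iff T ω hx M k hk1 hkm j hjM).mpr ?_
        rw [← hMB ω j]
        exact hcard
      rw [hsys, horder]
  have hdisj : (↑G : Set (Fin n × Finset (Fin n))).PairwiseDisjoint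
      (fun p => Eset T p.1 p.2 ∩ GoodSet T) := by
    intro p hp q hq hpq
    rw [Function.onFun, Set.disjoint_left]
    rintro ω ⟨hEp, hGω⟩ ⟨hEq, _⟩
    have hx : Function.Injective fun i => T i ω := inj_of_mem_Good T hGω
    obtain ⟨_, _, _, hp3, hp4⟩ := hGmem.mp (Finset.mem_coe.mp hp)
    obtain ⟨_, _, _, hq3, hq4⟩ := hGmem.mp (Finset.mem_coe.mp hq)
    have hBp : p.2 = upSet (fun i => T i ω) p.1 := (mem_Eset_iff T hx).mp hEp
    have hBq : q.2 = upSet (fun i => T i ω) q.1 := (mem_Eset_iff T hx).mp hEq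
    rw [hBp] at hp3 hp4
    rw [hBq] at hq3 hq4
    have h12 : p.1 = q.1 := crit_unique φ hφmono _ hx hp3 hp4 hq3 hq4
    apply hpq
    have h22 : p.2 = q.2 := by rw [hBp, hBq, h12]
    exact Prod.ext h12 h22
  have main : (μ {ω | sysLifeOn T Finset.univ φ ω = orderStat T M k ω}).toReal
      = ∑ p ∈ G, 1 / ((n : ℝ) * ((n - 1).choose p.2.card : ℕ)) := by
    calc (μ {ω | sysLifeOn T Finset.univ φ ω = orderStat T M k ω}).toReal
        = (μ ({ω | sysLifeOn T Finset.univ φ ω = orderStat T M k ω} ∩ GoodSet T)).toReal := by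
          rw [measure_inter_conull hGc]
      _ = (μ (⋃ p ∈ G, (Eset T p.1 p.2 ∩ GoodSet T))).toReal := by
          congr 1
          apply congrArg
          ext ω
          simp only [Set.mem_inter_iff, Set.mem_iUnion, Set.mem_setOf_eq, exists_prop]
          constructor
          · rintro ⟨hSω, hGω⟩
            obtain ⟨p, hpG, hpE⟩ := (hkey ω hGω).mp hSω
            exact ⟨p, hpG, hpE, hGω⟩
          · rintro ⟨p, hpG, hpE, hGω⟩
            exact ⟨(hkey ω hGω).mpr ⟨p, hpG, hpE⟩, hGω⟩
      _ = (∑ p ∈ G, μ (Eset T p.1 p.2 ∩ GoodSet T)).toReal := by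
          rw [measure_biUnion_finset hdisj
            (fun p _ => (measurable_Eset T hTmeas p.1 p.2).inter hGoodMeas)]
      _ = ∑ p ∈ G, (μ (Eset T p.1 p.2 ∩ GoodSet T)).toReal :=
          ENNReal.toReal_sum (fun p _ => measure_ne_top μ _)
      _ = ∑ p ∈ G, 1 / ((n : ℝ) * ((n - 1).choose p.2.card : ℕ)) := by
          apply Finset.sum_congr rfl
          intro p hp
          rw [measure_inter_conull hGc]
          have hjB : p.1 ∉ p.2 := (hGmem.mp hp).2.1
          have hrel : (μ (Eset T p.1 p.2)).toReal = relQual μ T p.1 p.2 := rfl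
          rw [hrel, hq p.1 p.2 hjB]
  calc (μ {ω | sysLifeOn T Finset.univ φ ω = orderStat T M k ω}).toReal
      = ∑ p ∈ G, 1 / ((n : ℝ) * ((n - 1).choose p.2.card : ℕ)) := main
    _ = _ := by
        rw [hG]
        exact (rhs_eq φ hφ01 hφmono M k
          (fun d => 1 / ((n : ℝ) * ((n - 1).choose d : ℕ)))).symm
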